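/- For every prime number p ≥ 13 there exist natural numbers i, j with i < p − 1 and j < p − 1 such that, setting a₁ = ⌈(p−1)·(1/3)⌉ and a₂ = a₃ = ⌈(p−1)·(3/4)⌉, the coefficient of x^i y^j in the polynomial x^{a₁} · y^{a₂} · (x+y)^{a₃} of 𝔽_p[x,y] is nonzero. -/
import Mathlib
open MvPolynomial

lemma coeff_helper (R : Type*) [CommSemiring R] (n k : ℕ) (hk : k ≤ n) :
    coeff (Finsupp.single 0 k + Finsupp.single 1 (n - k))
      ((X 0 + X 1 : MvPolynomial (Fin 2) R) ^ n) = (n.choose k : R) := by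
  rw [add_pow]
  rw [coeff_sum]
  have : ∀ t ∈ Finset.range (n+1),
      coeff (Finsupp.single 0 k + Finsupp.single 1 (n - k))
        ((X 0:MvPolynomial (Fin 2) R)^t * X 1 ^ (n-t) * (n.choose t : MvPolynomial (Fin 2) R))
      = if t = k then (n.choose k : R) else 0 := by
    intro t ht
    rw [X_pow_eq_monomial, X_pow_eq_monomial, monomial_mul, one_mul,
      ← C_eq_coe_nat, mul_comm, coeff_C_mul, coeff_monomial]
    by_cases h : t = k
    · subst h
      simp [mul_one]
    · rw [if_neg, if_neg h, mul_zero]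
      intro hEq
      apply h
      have := DFunLike.congr_fun hEq 0
      simpa using this
  rw [Finset.sum_congr rfl this, Finset.sum_ite_eq' (Finset.range (n+1)) k]
  simp [Nat.lt_succ_of_le hk]

/-- The `e = 1` case of Case 2 of Proposition 3.8. -/
theorem stmt_10 (p : ℕ) (hp : p.Prime) (hp' : 13 ≤ p) :
    ∃ i j : ℕ, i < p - 1 ∧ j < p - 1 ∧
      MvPolynomial.coeff (Finsupp.single 0 i + Finsupp.single 1 j)
        ((X 0 : MvPolynomial (Fin 2) (ZMod p)) ^ ⌈((p : ℚ) - 1) * (1 / 3)⌉₊ *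
          X 1 ^ ⌈((p : ℚ) - 1) * (3 / 4)⌉₊ *
          (X 0 + X 1) ^ ⌈((p : ℚ) - 1) * (3 / 4)⌉₊) ≠ 0 := by
  set a1 := ⌈((p : ℚ) - 1) * (1 / 3)⌉₊ with ha1
  set a3 := ⌈((p : ℚ) - 1) * (3 / 4)⌉₊ with ha3
  have hp13 : (13:ℚ) ≤ (p:ℚ) := by exact_mod_cast hp'
  have hq1 : ((p:ℚ) - 1) * (1/3) ≤ a1 := Nat.le_ceil _
  have hq1' : (a1:ℚ) < ((p:ℚ) - 1) * (1/3) + 1 := Nat.ceil_lt_add_one (by linarith)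
  have hq3 : ((p:ℚ) - 1) * (3/4) ≤ a3 := Nat.le_ceil _
  have hq3' : (a3:ℚ) < ((p:ℚ) - 1) * (3/4) + 1 := Nat.ceil_lt_add_one (by linarith)
  -- natural number bounds
  have hb1 : 3*a1 ≤ p + 1 := by
    have : ((3*a1 : ℕ) : ℚ) < ((p:ℚ) + 2) := by push_cast; linarith
    have := (by exact_mod_cast this : (3*a1 : ℕ) < p + 2); omega
  have hb1' : p ≤ 3*a1 + 1 := by
    have : ((p:ℚ)) ≤ ((3*a1 + 1 : ℕ) : ℚ) := by push_cast; linarith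
    exact_mod_cast this
  have hb3 : 4*a3 ≤ 3*p := by
    have : ((4*a3 : ℕ) : ℚ) < ((3*p + 1 : ℕ) : ℚ) := by push_cast; linarith
    have := (by exact_mod_cast this : (4*a3 : ℕ) < 3*p + 1); omega
  have hb3' : 3*p ≤ 4*a3 + 3 := by
    have : ((3*p : ℕ) : ℚ) ≤ ((4*a3 + 3 : ℕ) : ℚ) := by push_cast; linarith
    exact_mod_cast this
  -- p is odd, so 4*a3 ≠ 3*p
  obtain ⟨c, hc⟩ := hp.odd_of_ne_two (by omega)
  have hb3'' : 4*a3 + 1 ≤ 3*p := by omega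
  -- key inequality
  have hcase : p = 13 ∨ p = 17 ∨ p = 19 ∨ 23 ≤ p := by
    by_cases h : 23 ≤ p
    · tauto
    · interval_cases p <;> revert hp <;> decide
  have key : a1 + 2*a3 + 4 ≤ 2*p := by omega
  -- the exponent split
  set k := 2*a3 + 2 - p with hk
  have hkle : k ≤ a3 := by omega
  refine ⟨a1 + k, a3 + (a3 - k), by omega, by omega, ?_⟩
  have hsum : (Finsupp.single 0 (a1+k) + Finsupp.single 1 (a3 + (a3-k)) : Fin 2 →₀ ℕ)
      = (Finsupp.single 0 a1 + Finsupp.single 1 a3)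
        + (Finsupp.single 0 k + Finsupp.single 1 (a3-k)) := by
    rw [Finsupp.single_add, Finsupp.single_add]; abel
  have hmon : (X 0 : MvPolynomial (Fin 2) (ZMod p)) ^ a1 * X 1 ^ a3
      = monomial (Finsupp.single 0 a1 + Finsupp.single 1 a3) (1 : ZMod p) := by
    rw [X_pow_eq_monomial, X_pow_eq_monomial, monomial_mul, one_mul]
  rw [hsum, hmon, coeff_monomial_mul, one_mul, coeff_helper _ a3 k hkle]
  -- nonvanishing of the binomial coefficient mod p
  intro h0
  have hdvd : p ∣ a3.choose k := by
    haveI : NeZero p := ⟨by omega⟩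
    exact (ZMod.natCast_eq_zero_iff _ _).mp h0
  have : p ∣ a3.factorial := hdvd.trans ⟨k.factorial * (a3-k).factorial, by rw [← Nat.choose_mul_factorial_mul_factorial hkle]; ring⟩
  have := (Nat.Prime.dvd_factorial hp).mp this
  omega
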